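/- Let r ≥ 1 be an integer and let G be the graph 𝒢(1,r,r) on n = 2r + 3 vertices. Then q₁(G) > d₁(G) + 3/2 and q₂(G) > d₂(G) − 1/2, where q₁(G) ≥ q₂(G) are the two largest eigenvalues (with multiplicity) of the signless Laplacian Q(G) and d₁(G) ≥ d₂(G) are the two largest vertex degrees of G (here d₁(G) = d₂(G) = r + 2). -/

import Mathlib

open Matrix

/-- The signless Laplacian matrix `Q(G) = D + A` of a simple graph, over `ℝ`. -/
def sLapMatrix {m : ℕ} (G : SimpleGraph (Fin m)) [DecidableRel G.Adj] :
    Matrix (Fin m) (Fin m) ℝ :=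
  G.degMatrix ℝ + G.adjMatrix ℝ

/-- `q` lists the eigenvalues of `A` (with multiplicity) in non-increasing order. -/
def IsEigSeq {m : ℕ} (A : Matrix (Fin m) (Fin m) ℝ) (q : Fin m → ℝ) : Prop :=
  Antitone q ∧ ∃ (hA : A.IsHermitian) (σ : Equiv.Perm (Fin m)),
    ∀ i, q i = hA.eigenvalues (σ i)

/-- `d` lists the degrees of `G` (with multiplicity) in non-increasing order. -/
def IsDegSeq {m : ℕ} (G : SimpleGraph (Fin m)) [DecidableRel G.Adj] (d : Fin m → ℕ) : Prop :=
  Antitone d ∧ ∃ σ : Equiv.Perm (Fin m), ∀ i, d i = G.degree (σ i)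

/-- The graph `𝒢(p,r,s)` on `p + r + s + 2` vertices: the graph `ℋ(p,r,s)` plus the
edge `{u, v} = {0, 1}`. -/
def GGraph (p r s : ℕ) : SimpleGraph (Fin (p + r + s + 2)) where
  Adj a b :=
    ((a.val = 0 ∧ b.val = 1) ∨ (b.val = 0 ∧ a.val = 1)) ∨
    (((a.val = 0 ∧ 2 ≤ b.val ∧ b.val < p + r + 2) ∨
      (a.val = 1 ∧ 2 ≤ b.val ∧ (b.val < p + 2 ∨ p + r + 2 ≤ b.val))) ∨
     ((b.val = 0 ∧ 2 ≤ a.val ∧ a.val < p + r + 2) ∨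
      (b.val = 1 ∧ 2 ≤ a.val ∧ (a.val < p + 2 ∨ p + r + 2 ≤ a.val))))
  symm := by constructor; intro a b h; tauto
  loopless := by
    constructor
    intro a h
    rcases h with (⟨h1, h2⟩ | ⟨h1, h2⟩) |
      ((⟨h1, h2, _⟩ | ⟨h1, h2, _⟩) | (⟨h1, h2, _⟩ | ⟨h1, h2, _⟩)) <;> omega

instance GGraph.adjDecidable (p r s : ℕ) : DecidableRel (GGraph p r s).Adj := fun a b =>
  inferInstanceAs (Decidable
    (((a.val = 0 ∧ b.val = 1) ∨ (b.val = 0 ∧ a.val = 1)) ∨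
     (((a.val = 0 ∧ 2 ≤ b.val ∧ b.val < p + r + 2) ∨
       (a.val = 1 ∧ 2 ≤ b.val ∧ (b.val < p + 2 ∨ p + r + 2 ≤ b.val))) ∨
      ((b.val = 0 ∧ 2 ≤ a.val ∧ a.val < p + r + 2) ∨
       (b.val = 1 ∧ 2 ≤ a.val ∧ (a.val < p + 2 ∨ p + r + 2 ≤ a.val))))))

lemma GGraph_adj_iff (p r s : ℕ) (a b : Fin (p + r + s + 2)) :
    (GGraph p r s).Adj a b ↔
    (((a.val = 0 ∧ b.val = 1) ∨ (b.val = 0 ∧ a.val = 1)) ∨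
    (((a.val = 0 ∧ 2 ≤ b.val ∧ b.val < p + r + 2) ∨
      (a.val = 1 ∧ 2 ≤ b.val ∧ (b.val < p + 2 ∨ p + r + 2 ≤ b.val))) ∨
     ((b.val = 0 ∧ 2 ≤ a.val ∧ a.val < p + r + 2) ∨
      (b.val = 1 ∧ 2 ≤ a.val ∧ (a.val < p + 2 ∨ p + r + 2 ≤ a.val))))) := Iff.rfl

lemma sum_split {M : Type*} [AddCommMonoid M] (r : ℕ) (g : ℕ → M) (D E : M)
    (hD : ∀ j, 3 ≤ j → j < r + 3 → g j = D)
    (hE : ∀ j, r + 3 ≤ j → j < r + r + 3 → g j = E) :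
    ∑ j ∈ Finset.range (r + r + 3), g j = g 0 + g 1 + g 2 + r • D + r • E := by
  have h1 : ∑ j ∈ Finset.Ico 0 3, g j = g 0 + g 1 + g 2 := by
    rw [← Finset.range_eq_Ico]
    rw [Finset.sum_range_succ, Finset.sum_range_succ, Finset.sum_range_one]
  have h2 : ∑ j ∈ Finset.Ico 3 (r + 3), g j = r • D := by
    rw [Finset.sum_congr rfl (fun j hj => hD j (Finset.mem_Ico.mp hj).1 (Finset.mem_Ico.mp hj).2),
      Finset.sum_const, Nat.card_Ico]
    norm_num
  have h3 : ∑ j ∈ Finset.Ico (r + 3) (r + r + 3), g j = r • E := by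
    rw [Finset.sum_congr rfl (fun j hj => hE j (Finset.mem_Ico.mp hj).1 (Finset.mem_Ico.mp hj).2),
      Finset.sum_const, Nat.card_Ico]
    congr 1
    omega
  rw [Finset.range_eq_Ico,
    ← Finset.sum_Ico_consecutive g (by omega : 0 ≤ 3) (by omega : 3 ≤ r + r + 3),
    ← Finset.sum_Ico_consecutive g (by omega : 3 ≤ r + 3) (by omega : r + 3 ≤ r + r + 3),
    h1, h2, h3]
  abel

lemma sum_fin_split {M : Type*} [AddCommMonoid M] (r : ℕ) (g : ℕ → M) (D E : M)
    (hD : ∀ j, 3 ≤ j → j < r + 3 → g j = D)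
    (hE : ∀ j, r + 3 ≤ j → j < r + r + 3 → g j = E) :
    ∑ j : Fin (1 + r + r + 2), g j.val = g 0 + g 1 + g 2 + r • D + r • E := by
  rw [Fin.sum_univ_eq_sum_range, show 1 + r + r + 2 = r + r + 3 by omega,
    sum_split r g D E hD hE]

lemma adj_sum {M : Type*} [AddCommMonoid M] (r : ℕ) (v : Fin (1 + r + r + 2)) (f : ℕ → M)
    (D E : M)
    (hD : ∀ j, 3 ≤ j → j < r + 3 → f j = D)
    (hE : ∀ j, r + 3 ≤ j → j < r + r + 3 → f j = E) :
    ∑ j : Fin (1 + r + r + 2), (if (GGraph 1 r r).Adj v j then f j.val else 0) =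
      if v.val = 0 then f 1 + f 2 + r • D
      else if v.val = 1 then f 0 + f 2 + r • E
      else if v.val = 2 then f 0 + f 1
      else if v.val < r + 3 then f 0
      else f 1 := by
  rcases (show v.val = 0 ∨ v.val = 1 ∨ v.val = 2 ∨ (3 ≤ v.val ∧ v.val < r + 3) ∨
      r + 3 ≤ v.val from by omega) with hv | hv | hv | ⟨hv3, hvl⟩ | hv
  · rw [Finset.sum_congr rfl (fun j _ =>
      (if_congr (by rw [GGraph_adj_iff]; omega) rfl rfl :
        (if (GGraph 1 r r).Adj v j then f j.val else 0) =
        (if j.val = 1 ∨ (2 ≤ j.val ∧ j.val < r + 3) then f j.val else 0)))]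
    have hs := sum_fin_split r (fun t => if t = 1 ∨ (2 ≤ t ∧ t < r + 3) then f t else 0) D 0
      (fun j h3 hl => by rw [if_pos (by omega)]; exact hD j h3 hl)
      (fun j h3 hl => by rw [if_neg (by omega)])
    beta_reduce at hs
    rw [hs, if_neg (by omega : ¬((0:ℕ) = 1 ∨ (2 ≤ 0 ∧ 0 < r + 3))),
      if_pos (by omega : ((1:ℕ) = 1 ∨ (2 ≤ 1 ∧ 1 < r + 3))),
      if_pos (by omega : ((2:ℕ) = 1 ∨ (2 ≤ 2 ∧ 2 < r + 3))), smul_zero, if_pos hv]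
    abel
  · rw [Finset.sum_congr rfl (fun j _ =>
      (if_congr (by rw [GGraph_adj_iff]; omega) rfl rfl :
        (if (GGraph 1 r r).Adj v j then f j.val else 0) =
        (if j.val = 0 ∨ j.val = 2 ∨ r + 3 ≤ j.val then f j.val else 0)))]
    have hs := sum_fin_split r (fun t => if t = 0 ∨ t = 2 ∨ r + 3 ≤ t then f t else 0) 0 E
      (fun j h3 hl => by rw [if_neg (by omega)])
      (fun j h3 hl => by rw [if_pos (by omega)]; exact hE j h3 hl)
    beta_reduce at hs
    rw [hs, if_pos (by omega : ((0:ℕ) = 0 ∨ (0:ℕ) = 2 ∨ r + 3 ≤ 0)),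
      if_neg (by omega : ¬((1:ℕ) = 0 ∨ (1:ℕ) = 2 ∨ r + 3 ≤ 1)),
      if_pos (by omega : ((2:ℕ) = 0 ∨ (2:ℕ) = 2 ∨ r + 3 ≤ 2)), smul_zero,
      if_neg (by omega : ¬(v.val = 0)), if_pos hv]
    abel
  · rw [Finset.sum_congr rfl (fun j _ =>
      (if_congr (by rw [GGraph_adj_iff]; omega) rfl rfl :
        (if (GGraph 1 r r).Adj v j then f j.val else 0) =
        (if j.val = 0 ∨ j.val = 1 then f j.val else 0)))]
    have hs := sum_fin_split r (fun t => if t = 0 ∨ t = 1 then f t else 0) 0 0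
      (fun j h3 hl => by rw [if_neg (by omega)])
      (fun j h3 hl => by rw [if_neg (by omega)])
    beta_reduce at hs
    rw [hs, if_pos (by omega : ((0:ℕ) = 0 ∨ (0:ℕ) = 1)),
      if_pos (by omega : ((1:ℕ) = 0 ∨ (1:ℕ) = 1)),
      if_neg (by omega : ¬((2:ℕ) = 0 ∨ (2:ℕ) = 1)), smul_zero,
      if_neg (by omega : ¬(v.val = 0)), if_neg (by omega : ¬(v.val = 1)), if_pos hv]
    abel
  · rw [Finset.sum_congr rfl (fun j _ =>
      (if_congr (by rw [GGraph_adj_iff]; omega) rfl rfl :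
        (if (GGraph 1 r r).Adj v j then f j.val else 0) =
        (if j.val = 0 then f j.val else 0)))]
    have hs := sum_fin_split r (fun t => if t = 0 then f t else 0) 0 0
      (fun j h3 hl => by rw [if_neg (by omega)])
      (fun j h3 hl => by rw [if_neg (by omega)])
    beta_reduce at hs
    rw [hs, if_pos (rfl : (0:ℕ) = 0), if_neg (by omega : ¬((1:ℕ) = 0)),
      if_neg (by omega : ¬((2:ℕ) = 0)), smul_zero,
      if_neg (by omega : ¬(v.val = 0)), if_neg (by omega : ¬(v.val = 1)),
      if_neg (by omega : ¬(v.val = 2)), if_pos (by omega : v.val < r + 3)]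
    abel
  · rw [Finset.sum_congr rfl (fun j _ =>
      (if_congr (by rw [GGraph_adj_iff]; omega) rfl rfl :
        (if (GGraph 1 r r).Adj v j then f j.val else 0) =
        (if j.val = 1 then f j.val else 0)))]
    have hs := sum_fin_split r (fun t => if t = 1 then f t else 0) 0 0
      (fun j h3 hl => by rw [if_neg (by omega)])
      (fun j h3 hl => by rw [if_neg (by omega)])
    beta_reduce at hs
    rw [hs, if_neg (by omega : ¬((0:ℕ) = 1)), if_pos (rfl : (1:ℕ) = 1),
      if_neg (by omega : ¬((2:ℕ) = 1)), smul_zero,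
      if_neg (by omega : ¬(v.val = 0)), if_neg (by omega : ¬(v.val = 1)),
      if_neg (by omega : ¬(v.val = 2)), if_neg (by omega : ¬(v.val < r + 3))]
    abel

lemma GGraph_degree (r : ℕ) (v : Fin (1 + r + r + 2)) :
    (GGraph 1 r r).degree v =
      if v.val = 0 then r + 2 else if v.val = 1 then r + 2 else if v.val = 2 then 2 else 1 := by
  rw [← SimpleGraph.card_neighborFinset_eq_degree, SimpleGraph.neighborFinset_eq_filter,
    Finset.card_filter]
  have h := adj_sum (M := ℕ) r v (fun _ => 1) 1 1 (fun _ _ _ => rfl) (fun _ _ _ => rfl)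
  simp only [smul_eq_mul, mul_one] at h
  rw [h]
  split_ifs <;> omega

lemma sLap_mulVec (r : ℕ) (v : Fin (1 + r + r + 2)) (f : ℕ → ℝ) :
    (sLapMatrix (GGraph 1 r r) *ᵥ (fun j => f j.val)) v =
      ((GGraph 1 r r).degree v : ℝ) * f v.val +
        ∑ j : Fin (1 + r + r + 2), (if (GGraph 1 r r).Adj v j then f j.val else 0) := by
  rw [sLapMatrix, add_mulVec, Pi.add_apply, SimpleGraph.degMatrix_mulVec_apply,
    SimpleGraph.adjMatrix_mulVec_apply]
  congr 1
  rw [SimpleGraph.neighborFinset_eq_filter, Finset.sum_filter]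

-- test spectral helper lemmas
lemma smul_one_sub_conj {m : ℕ} {A : Matrix (Fin m) (Fin m) ℝ} (hA : A.IsHermitian) (c : ℝ) :
    c • (1 : Matrix (Fin m) (Fin m) ℝ) - A =
      (hA.eigenvectorUnitary : Matrix (Fin m) (Fin m) ℝ) *
        diagonal (fun i => c - hA.eigenvalues i) *
        (star (hA.eigenvectorUnitary : Matrix (Fin m) (Fin m) ℝ)) := by
  have hU : (hA.eigenvectorUnitary : Matrix (Fin m) (Fin m) ℝ) *
      (star (hA.eigenvectorUnitary : Matrix (Fin m) (Fin m) ℝ)) = 1 :=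
    (Matrix.mem_unitaryGroup_iff).mp hA.eigenvectorUnitary.2
  have hsp := hA.spectral_theorem
  rw [RCLike.ofReal_real_eq_id] at hsp
  simp only [Function.id_comp] at hsp
  have hdiag : diagonal (fun i => c - hA.eigenvalues i) =
      c • (1 : Matrix (Fin m) (Fin m) ℝ) - diagonal hA.eigenvalues := by
    ext i j
    by_cases h : i = j <;>
      simp [h, diagonal_apply_eq, diagonal_apply_ne, Matrix.one_apply, Matrix.smul_apply,
        Matrix.sub_apply]
  rw [hdiag, mul_sub, sub_mul, mul_smul_comm, smul_mul_assoc, mul_one, hU]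
  exact congrArg (c • 1 - ·) hsp

lemma dot_mulVec_le {m : ℕ} {A : Matrix (Fin m) (Fin m) ℝ} (hA : A.IsHermitian) (c : ℝ)
    (hc : ∀ i, hA.eigenvalues i ≤ c) (x : Fin m → ℝ) :
    x ⬝ᵥ (A *ᵥ x) ≤ c * (x ⬝ᵥ x) := by
  have hpsd : (c • (1 : Matrix (Fin m) (Fin m) ℝ) - A).PosSemidef := by
    rw [smul_one_sub_conj hA c]
    exact Matrix.PosSemidef.mul_mul_conjTranspose_same
      (Matrix.posSemidef_diagonal_iff.mpr fun i => by linarith [hc i]) _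
  have h := hpsd.dotProduct_mulVec_nonneg x
  rw [star_trivial, sub_mulVec, smul_mulVec, one_mulVec, dotProduct_sub,
    dotProduct_smul, smul_eq_mul] at h
  linarith

lemma exists_eigenvalue_eq {m : ℕ} {A : Matrix (Fin m) (Fin m) ℝ} (hA : A.IsHermitian)
    (μ : ℝ) (w : Fin m → ℝ) (hw : w ≠ 0) (heq : A *ᵥ w = μ • w) :
    ∃ i, hA.eigenvalues i = μ := by
  have hdet : (μ • (1 : Matrix (Fin m) (Fin m) ℝ) - A).det = 0 := by
    rw [← Matrix.exists_mulVec_eq_zero_iff]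
    exact ⟨w, hw, by rw [sub_mulVec, smul_mulVec, one_mulVec, heq, sub_self]⟩
  have hU : (hA.eigenvectorUnitary : Matrix (Fin m) (Fin m) ℝ) *
      (star (hA.eigenvectorUnitary : Matrix (Fin m) (Fin m) ℝ)) = 1 :=
    (Matrix.mem_unitaryGroup_iff).mp hA.eigenvectorUnitary.2
  have hone : ((hA.eigenvectorUnitary : Matrix (Fin m) (Fin m) ℝ)).det *
      ((star (hA.eigenvectorUnitary : Matrix (Fin m) (Fin m) ℝ))).det = 1 := by
    rw [← det_mul, hU, det_one]
  rw [smul_one_sub_conj hA μ, det_mul, det_mul, det_diagonal] at hdet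
  have hprod : ∏ i, (μ - hA.eigenvalues i) = 0 := by
    rcases mul_eq_zero.mp hdet with h | h
    · rcases mul_eq_zero.mp h with h' | h'
      · simp [h'] at hone
      · exact h'
    · simp [h] at hone
  obtain ⟨i, _, hi⟩ := Finset.prod_eq_zero_iff.mp hprod
  exact ⟨i, by linarith [sub_eq_zero.mp hi]⟩


noncomputable def wfun (r : ℕ) (μ : ℝ) : ℕ → ℝ := fun j =>
  if j = 0 then μ - 1 else if j = 1 then 1 - μ else if j = 2 then 0
  else if j < r + 3 then 1 else -1

def xfun (r : ℕ) : ℕ → ℝ := fun j =>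
  if j = 0 then 2 * (r : ℝ) + 1 else if j = 1 then 2 * (r : ℝ) + 1
  else if j = 2 then 2 else 1

def yfun (r : ℕ) : ℕ → ℝ := fun j =>
  if j = 0 then ((r : ℝ) + 2) * (2 * (r : ℝ) + 1) + ((2 * (r : ℝ) + 1) + 2 + (r : ℝ))
  else if j = 1 then ((r : ℝ) + 2) * (2 * (r : ℝ) + 1) + ((2 * (r : ℝ) + 1) + 2 + (r : ℝ))
  else if j = 2 then 4 + 2 * (2 * (r : ℝ) + 1)
  else 1 + (2 * (r : ℝ) + 1)

theorem GGraph_one_r_r_bounds {r : ℕ} (hr : 1 ≤ r)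
    (q : Fin (1 + r + r + 2) → ℝ) (hq : IsEigSeq (sLapMatrix (GGraph 1 r r)) q)
    (d : Fin (1 + r + r + 2) → ℕ) (hd : IsDegSeq (GGraph 1 r r) d) :
    q ⟨0, by omega⟩ > (d ⟨0, by omega⟩ : ℝ) + 3 / 2 ∧
    q ⟨1, by omega⟩ > (d ⟨1, by omega⟩ : ℝ) - 1 / 2 := by
  obtain ⟨hqa, hA, σ, hqe⟩ := hq
  obtain ⟨hda, τ, hde⟩ := hd
  have h1r : (1 : ℝ) ≤ (r : ℝ) := by exact_mod_cast hr
  set s : ℝ := Real.sqrt ((r : ℝ) ^ 2 + 4 * (r : ℝ)) with hsdef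
  have hs2 : s ^ 2 = (r : ℝ) ^ 2 + 4 * (r : ℝ) := Real.sq_sqrt (by positivity)
  have hslb : (r : ℝ) + 1 < s := by
    rw [hsdef]; exact (Real.lt_sqrt (by positivity)).mpr (by nlinarith)
  have hsub : s < (r : ℝ) + 2 := by
    rw [hsdef]; exact (Real.sqrt_lt' (by positivity)).mpr (by nlinarith)
  set μ : ℝ := ((r : ℝ) + 2 + s) / 2 with hμdef
  have hμq : μ ^ 2 = ((r : ℝ) + 2) * μ - 1 := by rw [hμdef]; linear_combination hs2 / 4
  have hμlb : (r : ℝ) + 3 / 2 < μ := by rw [hμdef]; linarith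
  have hμub : μ < (r : ℝ) + 2 := by rw [hμdef]; linarith
  have hdeg : ∀ v : Fin (1 + r + r + 2), (GGraph 1 r r).degree v ≤ r + 2 := fun v => by
    rw [GGraph_degree]; split_ifs <;> omega
  -- the eigenvector for μ
  have hQw : sLapMatrix (GGraph 1 r r) *ᵥ (fun j : Fin (1 + r + r + 2) => wfun r μ j.val)
      = μ • (fun j : Fin (1 + r + r + 2) => wfun r μ j.val) := by
    funext v
    rw [Pi.smul_apply, smul_eq_mul, sLap_mulVec r v (wfun r μ), GGraph_degree r v,
      adj_sum r v (wfun r μ) 1 (-1)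
        (fun j h3 hl => by
          unfold wfun
          rw [if_neg (by omega), if_neg (by omega), if_neg (by omega), if_pos (by omega)])
        (fun j h3 hl => by
          unfold wfun
          rw [if_neg (by omega), if_neg (by omega), if_neg (by omega), if_neg (by omega)])]
    rcases (show v.val = 0 ∨ v.val = 1 ∨ v.val = 2 ∨ (3 ≤ v.val ∧ v.val < r + 3) ∨
        r + 3 ≤ v.val from by omega) with hv | hv | hv | ⟨hv3, hvl⟩ | hv
    · rw [hv]
      norm_num [wfun, nsmul_eq_mul] <;> push_cast <;> linear_combination -hμq
    · rw [hv]
      norm_num [wfun, nsmul_eq_mul] <;> push_cast <;> linear_combination hμq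
    · rw [hv]
      norm_num [wfun, nsmul_eq_mul]
    · have hw : wfun r μ v.val = 1 := by
        unfold wfun
        rw [if_neg (by omega), if_neg (by omega), if_neg (by omega), if_pos (by omega)]
      simp only [if_neg (show ¬v.val = 0 by omega), if_neg (show ¬v.val = 1 by omega),
        if_neg (show ¬v.val = 2 by omega), if_pos hvl, hw]
      norm_num [wfun] <;> linarith
    · have hw : wfun r μ v.val = -1 := by
        unfold wfun
        rw [if_neg (by omega), if_neg (by omega), if_neg (by omega), if_neg (by omega)]
      simp only [if_neg (show ¬v.val = 0 by omega), if_neg (show ¬v.val = 1 by omega),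
        if_neg (show ¬v.val = 2 by omega), if_neg (show ¬v.val < r + 3 by omega), hw]
      norm_num [wfun] <;> linarith
  -- the test vector x
  have hQx : sLapMatrix (GGraph 1 r r) *ᵥ (fun j : Fin (1 + r + r + 2) => xfun r j.val)
      = fun j : Fin (1 + r + r + 2) => yfun r j.val := by
    funext v
    rw [sLap_mulVec r v (xfun r), GGraph_degree r v,
      adj_sum r v (xfun r) 1 1
        (fun j h3 hl => by
          unfold xfun
          rw [if_neg (by omega), if_neg (by omega), if_neg (by omega)])
        (fun j h3 hl => by
          unfold xfun
          rw [if_neg (by omega), if_neg (by omega), if_neg (by omega)])]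
    rcases (show v.val = 0 ∨ v.val = 1 ∨ v.val = 2 ∨ (3 ≤ v.val ∧ v.val < r + 3) ∨
        r + 3 ≤ v.val from by omega) with hv | hv | hv | ⟨hv3, hvl⟩ | hv
    · rw [hv]; norm_num [xfun, yfun, nsmul_eq_mul] <;> push_cast <;> ring
    · rw [hv]; norm_num [xfun, yfun, nsmul_eq_mul] <;> push_cast <;> ring
    · rw [hv]; norm_num [xfun, yfun, nsmul_eq_mul] <;> push_cast <;> ring
    · have hx : xfun r v.val = 1 := by
        unfold xfun; rw [if_neg (by omega), if_neg (by omega), if_neg (by omega)]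
      have hy : yfun r v.val = 1 + (2 * (r : ℝ) + 1) := by
        unfold yfun; rw [if_neg (by omega), if_neg (by omega), if_neg (by omega)]
      simp only [if_neg (show ¬v.val = 0 by omega), if_neg (show ¬v.val = 1 by omega),
        if_neg (show ¬v.val = 2 by omega), if_pos hvl, hx, hy]
      norm_num [xfun] <;> push_cast <;> ring
    · have hx : xfun r v.val = 1 := by
        unfold xfun; rw [if_neg (by omega), if_neg (by omega), if_neg (by omega)]
      have hy : yfun r v.val = 1 + (2 * (r : ℝ) + 1) := by
        unfold yfun; rw [if_neg (by omega), if_neg (by omega), if_neg (by omega)]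
      simp only [if_neg (show ¬v.val = 0 by omega), if_neg (show ¬v.val = 1 by omega),
        if_neg (show ¬v.val = 2 by omega), if_neg (show ¬v.val < r + 3 by omega), hx, hy]
      norm_num [xfun] <;> push_cast <;> ring
  -- dot products
  have hS : (fun j : Fin (1 + r + r + 2) => xfun r j.val) ⬝ᵥ
      (fun j : Fin (1 + r + r + 2) => xfun r j.val)
      = 2 * (2 * (r : ℝ) + 1) ^ 2 + 4 + (r : ℝ) + (r : ℝ) := by
    simp only [dotProduct]
    have hs := sum_fin_split r (fun t => xfun r t * xfun r t) 1 1
      (fun j h3 hl => by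
        unfold xfun
        rw [if_neg (by omega), if_neg (by omega), if_neg (by omega)]; ring)
      (fun j h3 hl => by
        unfold xfun
        rw [if_neg (by omega), if_neg (by omega), if_neg (by omega)]; ring)
    beta_reduce at hs
    rw [hs]
    norm_num [xfun, nsmul_eq_mul]
    ring
  have hT : (fun j : Fin (1 + r + r + 2) => xfun r j.val) ⬝ᵥ
      (fun j : Fin (1 + r + r + 2) => yfun r j.val)
      = 2 * ((2 * (r : ℝ) + 1) * (((r : ℝ) + 2) * (2 * (r : ℝ) + 1) + ((2 * (r : ℝ) + 1) + 2 + (r : ℝ))))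
        + 2 * (4 + 2 * (2 * (r : ℝ) + 1)) + 2 * (r : ℝ) * (1 + (2 * (r : ℝ) + 1)) := by
    simp only [dotProduct]
    have hs := sum_fin_split r (fun t => xfun r t * yfun r t) (1 + (2 * (r : ℝ) + 1))
        (1 + (2 * (r : ℝ) + 1))
      (fun j h3 hl => by
        unfold xfun yfun
        rw [if_neg (by omega), if_neg (by omega), if_neg (by omega),
          if_neg (by omega), if_neg (by omega), if_neg (by omega)]; ring)
      (fun j h3 hl => by
        unfold xfun yfun
        rw [if_neg (by omega), if_neg (by omega), if_neg (by omega),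
          if_neg (by omega), if_neg (by omega), if_neg (by omega)]; ring)
    beta_reduce at hs
    rw [hs]
    norm_num [xfun, yfun, nsmul_eq_mul]
    ring
  -- q 0 is the largest eigenvalue
  have hupper : ∀ i, hA.eigenvalues i ≤ q ⟨0, by omega⟩ := by
    intro i
    have h := hqe (σ.symm i)
    rw [Equiv.apply_symm_apply] at h
    rw [← h]
    exact hqa (by simp [Fin.le_def])
  have hray := dot_mulVec_le hA _ hupper (fun j : Fin (1 + r + r + 2) => xfun r j.val)
  rw [hQx, hT, hS] at hray
  have hSpos : (0 : ℝ) < 2 * (2 * (r : ℝ) + 1) ^ 2 + 4 + (r : ℝ) + (r : ℝ) := by positivity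
  have hq0 : (r : ℝ) + 7 / 2 < q ⟨0, by omega⟩ := by
    have hineq : ((r : ℝ) + 7 / 2) * (2 * (2 * (r : ℝ) + 1) ^ 2 + 4 + (r : ℝ) + (r : ℝ))
        < 2 * ((2 * (r : ℝ) + 1) * (((r : ℝ) + 2) * (2 * (r : ℝ) + 1) + ((2 * (r : ℝ) + 1) + 2 + (r : ℝ))))
        + 2 * (4 + 2 * (2 * (r : ℝ) + 1)) + 2 * (r : ℝ) * (1 + (2 * (r : ℝ) + 1)) := by
      nlinarith [h1r, sq_nonneg ((r : ℝ) - 1)]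
    exact (mul_lt_mul_iff_left₀ hSpos).mp (lt_of_lt_of_le hineq hray)
  -- second eigenvalue
  have hwne : (fun j : Fin (1 + r + r + 2) => wfun r μ j.val) ≠ 0 := by
    intro h
    have h0 := congrFun h ⟨0, by omega⟩
    simp only [wfun, Pi.zero_apply] at h0
    norm_num at h0
    linarith
  obtain ⟨i, hi⟩ := exists_eigenvalue_eq hA μ _ hwne hQw
  have hji : q (σ.symm i) = μ := by rw [hqe (σ.symm i), Equiv.apply_symm_apply, hi]
  have hne : (σ.symm i).val ≠ 0 := by
    intro h0
    have : σ.symm i = ⟨0, by omega⟩ := Fin.ext h0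
    rw [this] at hji
    linarith
  have hq1 : μ ≤ q ⟨1, by omega⟩ := by
    rw [← hji]
    exact hqa (by rw [Fin.le_def]; simp; omega)
  have hd0 : ((d ⟨0, by omega⟩ : ℕ) : ℝ) ≤ (r : ℝ) + 2 := by
    have := le_trans (le_of_eq (hde ⟨0, by omega⟩)) (hdeg _)
    exact_mod_cast this
  have hd1 : ((d ⟨1, by omega⟩ : ℕ) : ℝ) ≤ (r : ℝ) + 2 := by
    have := le_trans (le_of_eq (hde ⟨1, by omega⟩)) (hdeg _)
    exact_mod_cast this
  constructor
  · linarith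
  · linarith
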